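/- arXiv:0803.1060 — 4 statements merged into one kernel-verified Lean document; each statement's English description precedes it below -/
import Mathlib

section
/- Let γ be a C^4 lightlike curve in a pseudo-Riemannian vector space. Then the fourth-order Taylor expansion of the quadratic form gives ⟨γ(t+h) − γ(t), γ(t+h) − γ(t)⟩ = −(1/12)⟨γ''(t), γ''(t)⟩ h^4 + O(h^5) as h → 0. -/
open Asymptotics Filter

private lemma pow_isBigO_pow_nhds_zero {j k : ℕ} (hjk : j ≤ k) :
    (fun x : ℝ => x ^ k) =O[nhds 0] fun x => x ^ j := by
  rw [isBigO_iff]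
  refine ⟨1, ?_⟩
  have h1 : ∀ᶠ x : ℝ in nhds 0, |x| < 1 := by
    filter_upwards [Metric.ball_mem_nhds (0 : ℝ) one_pos] with x hx
    simpa [Real.dist_eq] using hx
  filter_upwards [h1] with x hx
  rw [one_mul, Real.norm_eq_abs, Real.norm_eq_abs, abs_pow, abs_pow]
  exact pow_le_pow_of_le_one (abs_nonneg x) hx.le hjk

private lemma integrate_isBigO {E : Type*} [NormedAddCommGroup E] [NormedSpace ℝ E]
    {f f' : ℝ → E} (hd : ∀ x, HasDerivAt f (f' x) x) (h0 : f 0 = 0) {k : ℕ}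
    (hO : f' =O[nhds 0] fun h => h ^ k) :
    f =O[nhds 0] fun h => h ^ (k + 1) := by
  obtain ⟨C, hCpos, hC⟩ := hO.exists_pos
  rw [isBigOWith_iff, Metric.eventually_nhds_iff] at hC
  obtain ⟨δ, hδ, hball⟩ := hC
  rw [isBigO_iff]
  refine ⟨C, Metric.eventually_nhds_iff.mpr ⟨δ, hδ, fun h hh => ?_⟩⟩
  have hmem : ∀ x ∈ Set.uIcc (0 : ℝ) h, |x| ≤ |h| := by
    intro x hx
    rcases le_total (0 : ℝ) h with h0h | h0h
    · rw [Set.uIcc_of_le h0h] at hx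
      rw [abs_of_nonneg hx.1, abs_of_nonneg h0h]; exact hx.2
    · rw [Set.uIcc_of_ge h0h] at hx
      rw [abs_of_nonpos hx.2, abs_of_nonpos h0h]; linarith [hx.1]
  have key := (convex_uIcc (0 : ℝ) h).norm_image_sub_le_of_norm_hasDerivWithin_le
    (f := f) (f' := f')
    (fun x _ => (hd x).hasDerivWithinAt)
    (C := C * |h| ^ k)
    (fun x hx => by
      have hxδ : dist x 0 < δ := by
        rw [Real.dist_eq, sub_zero]
        exact lt_of_le_of_lt (hmem x hx) (by simpa [Real.dist_eq] using hh)
      calc ‖f' x‖ ≤ C * ‖x ^ k‖ := hball hxδ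
        _ = C * |x| ^ k := by rw [Real.norm_eq_abs, abs_pow]
        _ ≤ C * |h| ^ k := by
            exact mul_le_mul_of_nonneg_left
              (pow_le_pow_left₀ (abs_nonneg x) (hmem x hx) k) hCpos.le)
    Set.left_mem_uIcc Set.right_mem_uIcc
  rw [h0, sub_zero, sub_zero] at key
  calc ‖f h‖ ≤ C * |h| ^ k * ‖h‖ := key
    _ = C * ‖h ^ (k + 1)‖ := by
        rw [Real.norm_eq_abs, Real.norm_eq_abs, abs_pow, pow_succ]; ring

private lemma smul_const_isBigO {E : Type*} [NormedAddCommGroup E] [NormedSpace ℝ E]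
    {f g : ℝ → ℝ} (hf : f =O[nhds 0] g) (v : E) :
    (fun h => f h • v) =O[nhds 0] g := by
  refine IsBigO.trans ?_ hf
  rw [isBigO_iff]
  refine ⟨‖v‖, Eventually.of_forall fun h => ?_⟩
  rw [norm_smul, mul_comm]

theorem lightlike_taylor_fourth_order (m : ℕ)
    (B : (Fin m → ℝ) →ₗ[ℝ] (Fin m → ℝ) →ₗ[ℝ] ℝ)
    (hB : ∀ v w, B v w = B w v)
    (γ : ℝ → Fin m → ℝ) (hγ : ContDiff ℝ 4 γ)
    (hlight : ∀ t, B (deriv γ t) (deriv γ t) = 0) :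
    ∀ t, (fun h : ℝ => B (γ (t + h) - γ t) (γ (t + h) - γ t)
        + (1 / 12) * B (iteratedDeriv 2 γ t) (iteratedDeriv 2 γ t) * h ^ 4)
      =O[nhds (0 : ℝ)] (fun h : ℝ => h ^ 5) := by
  intro t
  -- continuous bilinear version of B
  let B₂ : (Fin m → ℝ) →ₗ[ℝ] (Fin m → ℝ) →L[ℝ] ℝ :=
    { toFun := fun v => LinearMap.toContinuousLinearMap (B v)
      map_add' := fun u v => by ext w; simp
      map_smul' := fun r v => by ext w; simp }
  let B' : (Fin m → ℝ) →L[ℝ] (Fin m → ℝ) →L[ℝ] ℝ := LinearMap.toContinuousLinearMap B₂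
  have hB' : ∀ u v, B' u v = B u v := fun u v => rfl
  set γ₂ := iteratedDeriv 2 γ with hγ₂
  set γ₃ := iteratedDeriv 3 γ with hγ₃
  -- differentiability facts
  have hder : ∀ n : ℕ, n < 4 → ∀ s, HasDerivAt (iteratedDeriv n γ) (iteratedDeriv (n + 1) γ s) s := by
    intro n hn s
    have hdiff : Differentiable ℝ (iteratedDeriv n γ) :=
      hγ.differentiable_iteratedDeriv n (by exact_mod_cast hn)
    rw [iteratedDeriv_succ]
    exact (hdiff s).hasDerivAt
  have hd1 : ∀ s, HasDerivAt (deriv γ) (γ₂ s) s := by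
    intro s
    have := hder 1 (by norm_num) s
    rwa [iteratedDeriv_one] at this
  have hd2 : ∀ s, HasDerivAt γ₂ (γ₃ s) s := fun s => hder 2 (by norm_num) s
  have hdiff3 : Differentiable ℝ γ₃ := hγ.differentiable_iteratedDeriv 3 (by norm_num)
  -- first identity : B γ₂ γ₁ = 0
  have idq : ∀ s, B (γ₂ s) (deriv γ s) = 0 := by
    intro s
    have hc : (fun u => B' (deriv γ u) (deriv γ u)) = fun _ => (0 : ℝ) :=
      funext fun u => by rw [hB']; exact hlight u
    have hcl : HasDerivAt (fun u => B' (deriv γ u)) (B' (γ₂ s)) s :=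
      B'.hasFDerivAt.comp_hasDerivAt s (hd1 s)
    have hda := hcl.clm_apply (hd1 s)
    have hz : HasDerivAt (fun u => B' (deriv γ u) (deriv γ u)) 0 s := by
      rw [hc]; exact hasDerivAt_const s 0
    have huniq := hda.unique hz
    rw [hB', hB'] at huniq
    have hsymm : B (deriv γ s) (γ₂ s) = B (γ₂ s) (deriv γ s) := hB _ _
    rw [hsymm] at huniq
    linarith
  -- second identity : B γ₃ γ₁ + B γ₂ γ₂ = 0
  have idr : ∀ s, B (γ₃ s) (deriv γ s) + B (γ₂ s) (γ₂ s) = 0 := by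
    intro s
    have hc : (fun u => B' (γ₂ u) (deriv γ u)) = fun _ => (0 : ℝ) :=
      funext fun u => by rw [hB']; exact idq u
    have hcl : HasDerivAt (fun u => B' (γ₂ u)) (B' (γ₃ s)) s :=
      B'.hasFDerivAt.comp_hasDerivAt s (hd2 s)
    have hda := hcl.clm_apply (hd1 s)
    have hz : HasDerivAt (fun u => B' (γ₂ u) (deriv γ u)) 0 s := by
      rw [hc]; exact hasDerivAt_const s 0
    have huniq := hda.unique hz
    rw [hB', hB'] at huniq
    linarith
  set a := deriv γ t with ha
  set b := γ₂ t with hb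
  set c := γ₃ t with hc
  have haa : B a a = 0 := hlight t
  have hba : B b a = 0 := idq t
  have hab : B a b = 0 := by rw [hB]; exact hba
  have hca : B c a = -B b b := by have := idr t; linarith
  have hac : B a c = -B b b := by rw [hB]; exact hca
  have hcb : B c b = B b c := hB _ _
  -- Taylor remainders
  set S : ℝ → Fin m → ℝ := fun h => h • a + (h ^ 2 / 2) • b + (h ^ 3 / 6) • c with hS_def
  set R0 : ℝ → Fin m → ℝ :=
    fun h => γ (t + h) - γ t - h • a - (h ^ 2 / 2) • b - (h ^ 3 / 6) • c with hR0_def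
  set R1 : ℝ → Fin m → ℝ :=
    fun h => deriv γ (t + h) - a - h • b - (h ^ 2 / 2) • c with hR1_def
  set R2 : ℝ → Fin m → ℝ := fun h => γ₂ (t + h) - b - h • c with hR2_def
  set R3 : ℝ → Fin m → ℝ := fun h => γ₃ (t + h) - c with hR3_def
  have hdR2 : ∀ h, HasDerivAt R2 (R3 h) h := by
    intro h
    have h1 : HasDerivAt (fun x => γ₂ (t + x)) (γ₃ (t + h)) h :=
      (hd2 (t + h)).comp_const_add t h
    have h2 : HasDerivAt (fun x : ℝ => x • c) ((1 : ℝ) • c) h := (hasDerivAt_id h).smul_const c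
    have h3 := (h1.sub (hasDerivAt_const h b)).sub h2
    convert h3 using 1
    any_goals (with_reducible_and_instances rfl)
    simp [hR3_def]
  have hdR1 : ∀ h, HasDerivAt R1 (R2 h) h := by
    intro h
    have h1 : HasDerivAt (fun x => deriv γ (t + x)) (γ₂ (t + h)) h :=
      (hd1 (t + h)).comp_const_add t h
    have h2 : HasDerivAt (fun x : ℝ => x • b) ((1 : ℝ) • b) h := (hasDerivAt_id h).smul_const b
    have h3 : HasDerivAt (fun x : ℝ => (x ^ 2 / 2) • c) ((↑2 * h ^ 1 / 2) • c) h :=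
      ((hasDerivAt_pow 2 h).div_const 2).smul_const c
    have h4 := ((h1.sub (hasDerivAt_const h a)).sub h2).sub h3
    convert h4 using 1
    any_goals (with_reducible_and_instances rfl)
    rw [hR2_def]
    simp only [one_smul, pow_one, Nat.cast_ofNat]
    rw [show (2 : ℝ) * h / 2 = h by ring]
    abel
  have hdR0 : ∀ h, HasDerivAt R0 (R1 h) h := by
    intro h
    have h1 : HasDerivAt (fun x => γ (t + x)) (deriv γ (t + h)) h := by
      have hdg : Differentiable ℝ γ := hγ.differentiable (by norm_num)
      exact ((hdg (t + h)).hasDerivAt).comp_const_add t h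
    have h2 : HasDerivAt (fun x : ℝ => x • a) ((1 : ℝ) • a) h := (hasDerivAt_id h).smul_const a
    have h3 : HasDerivAt (fun x : ℝ => (x ^ 2 / 2) • b) ((↑2 * h ^ 1 / 2) • b) h :=
      ((hasDerivAt_pow 2 h).div_const 2).smul_const b
    have h4 : HasDerivAt (fun x : ℝ => (x ^ 3 / 6) • c) ((↑3 * h ^ 2 / 6) • c) h :=
      ((hasDerivAt_pow 3 h).div_const 6).smul_const c
    have h5 := (((h1.sub (hasDerivAt_const h (γ t))).sub h2).sub h3).sub h4
    convert h5 using 1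
    any_goals (with_reducible_and_instances rfl)
    rw [hR1_def]
    simp only [one_smul, pow_one, Nat.cast_ofNat]
    rw [show (2 : ℝ) * h / 2 = h by ring, show (3 : ℝ) * h ^ 2 / 6 = h ^ 2 / 2 by ring]
    abel
  -- R3 = O(h)
  have hR3 : R3 =O[nhds 0] fun h => h ^ 1 := by
    have h1 : (fun s => γ₃ s - γ₃ t) =O[nhds t] fun s => s - t := (hdiff3 t).isBigO_sub
    have h2 : Tendsto (fun h : ℝ => t + h) (nhds 0) (nhds t) := by
      have hcont : Continuous (fun h : ℝ => t + h) := continuous_const.add continuous_id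
      simpa using hcont.tendsto 0
    have h3 := h1.comp_tendsto h2
    simp only [Function.comp_def] at h3
    have h4 : (fun h : ℝ => t + h - t) = fun h : ℝ => h ^ 1 := funext fun h => by ring
    rw [h4] at h3
    exact h3.congr_left fun h => by rw [hR3_def, hc]
  have hR2' : R2 =O[nhds 0] fun h => h ^ 2 :=
    integrate_isBigO hdR2 (by rw [hR2_def]; simp [hb]) hR3
  have hR1' : R1 =O[nhds 0] fun h => h ^ 3 :=
    integrate_isBigO hdR1 (by rw [hR1_def]; simp [ha]) hR2'
  have hR0' : R0 =O[nhds 0] fun h => h ^ 4 :=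
    integrate_isBigO hdR0 (by rw [hR0_def]; simp) hR1'
  -- S = O(h)
  have hSO : S =O[nhds 0] fun h => h ^ 1 := by
    have e1 : (fun h : ℝ => h • a) =O[nhds 0] fun h => h ^ 1 :=
      smul_const_isBigO ((isBigO_refl (fun h : ℝ => h) _).congr_right fun h => (pow_one h).symm) a
    have e2 : (fun h : ℝ => (h ^ 2 / 2) • b) =O[nhds 0] fun h => h ^ 1 := by
      refine smul_const_isBigO ?_ b
      have := (pow_isBigO_pow_nhds_zero (by norm_num : 1 ≤ 2)).const_mul_left (1 / 2 : ℝ)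
      exact this.congr_left fun h => by ring
    have e3 : (fun h : ℝ => (h ^ 3 / 6) • c) =O[nhds 0] fun h => h ^ 1 := by
      refine smul_const_isBigO ?_ c
      have := (pow_isBigO_pow_nhds_zero (by norm_num : 1 ≤ 3)).const_mul_left (1 / 6 : ℝ)
      exact this.congr_left fun h => by ring
    exact ((e1.add e2).add e3).congr_left fun h => by rw [hS_def]
  -- bilinear bigO
  have hbil : ∀ (u v : ℝ → Fin m → ℝ) (f g : ℝ → ℝ), u =O[nhds 0] f → v =O[nhds 0] g →
      (fun h => B (u h) (v h)) =O[nhds 0] fun h => f h * g h := by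
    intro u v f g hu hv
    have h1 : (fun h => B (u h) (v h)) =O[nhds 0] fun h => ‖u h‖ * ‖v h‖ := by
      rw [isBigO_iff]
      refine ⟨‖B'‖, Eventually.of_forall fun h => ?_⟩
      have hle : ‖B' (u h) (v h)‖ ≤ ‖B'‖ * ‖u h‖ * ‖v h‖ := B'.le_opNorm₂ _ _
      rw [hB'] at hle
      calc ‖B (u h) (v h)‖ ≤ ‖B'‖ * ‖u h‖ * ‖v h‖ := hle
        _ = ‖B'‖ * (‖u h‖ * ‖v h‖) := by ring
        _ = ‖B'‖ * ‖‖u h‖ * ‖v h‖‖ := by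
            rw [Real.norm_of_nonneg (mul_nonneg (norm_nonneg _) (norm_nonneg _))]
    exact h1.trans ((hu.norm_left).mul (hv.norm_left))
  -- expansion identity
  have heq : ∀ h : ℝ, B (γ (t + h) - γ t) (γ (t + h) - γ t) + 1 / 12 * B b b * h ^ 4
      = h ^ 5 / 6 * B b c + h ^ 6 / 36 * B c c
        + B (S h) (R0 h) + B (R0 h) (S h) + B (R0 h) (R0 h) := by
    intro h
    have hΔ : γ (t + h) - γ t = S h + R0 h := by rw [hS_def, hR0_def]; dsimp only; abel
    rw [hΔ, hS_def]
    simp only [map_add, map_smul, LinearMap.add_apply, LinearMap.smul_apply, smul_eq_mul]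
    linear_combination (h * h) * haa + (h * (h ^ 2 / 2)) * hab + ((h ^ 2 / 2) * h) * hba
      + (h * (h ^ 3 / 6)) * hac + ((h ^ 3 / 6) * h) * hca + ((h ^ 3 / 6) * (h ^ 2 / 2)) * hcb
  have target_eq : (fun h : ℝ => B (γ (t + h) - γ t) (γ (t + h) - γ t)
      + 1 / 12 * B (iteratedDeriv 2 γ t) (iteratedDeriv 2 γ t) * h ^ 4)
      = fun h : ℝ => h ^ 5 / 6 * B b c + h ^ 6 / 36 * B c c
        + B (S h) (R0 h) + B (R0 h) (S h) + B (R0 h) (R0 h) := by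
    funext h
    rw [← hγ₂, ← hb]
    exact heq h
  rw [target_eq]
  have T1 : (fun h : ℝ => h ^ 5 / 6 * B b c) =O[nhds 0] fun h : ℝ => h ^ 5 :=
    ((isBigO_refl (fun h : ℝ => h ^ 5) _).const_mul_left (B b c / 6)).congr_left
      fun h => by ring
  have T2 : (fun h : ℝ => h ^ 6 / 36 * B c c) =O[nhds 0] fun h : ℝ => h ^ 5 :=
    ((pow_isBigO_pow_nhds_zero (by norm_num : 5 ≤ 6)).const_mul_left (B c c / 36)).congr_left
      fun h => by ring
  have T3 : (fun h : ℝ => B (S h) (R0 h)) =O[nhds 0] fun h : ℝ => h ^ 5 := by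
    have := hbil S R0 _ _ hSO hR0'
    refine this.trans ?_
    exact (isBigO_refl (fun h : ℝ => h ^ 5) _).congr_left fun h => by ring
  have T4 : (fun h : ℝ => B (R0 h) (S h)) =O[nhds 0] fun h : ℝ => h ^ 5 := by
    have := hbil R0 S _ _ hR0' hSO
    refine this.trans ?_
    exact (isBigO_refl (fun h : ℝ => h ^ 5) _).congr_left fun h => by ring
  have T5 : (fun h : ℝ => B (R0 h) (R0 h)) =O[nhds 0] fun h : ℝ => h ^ 5 := by
    have := hbil R0 R0 _ _ hR0' hR0'
    refine this.trans ?_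
    exact (pow_isBigO_pow_nhds_zero (by norm_num : 5 ≤ 8)).congr_left fun h => by ring
  exact (((T1.add T2).add T3).add T4).add T5
end

section
/- Let γ be a lightlike curve with two parametrizations γ(t) and γ(u), related by a C^2 change of variables u = u(t). Then ⟨d²γ/dt², d²γ/dt²⟩ = (du/dt)^4 ⟨d²γ/du², d²γ/du²⟩; consequently the 1-form |⟨γ'', γ''⟩|^{1/4} dt is independent of the parametrization up to sign. -/
theorem lightlike_reparametrization_invariance (m : ℕ)
    (B : (Fin m → ℝ) →ₗ[ℝ] (Fin m → ℝ) →ₗ[ℝ] ℝ)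
    (hB : ∀ v w, B v w = B w v)
    (γ : ℝ → Fin m → ℝ) (hγ : ContDiff ℝ 2 γ)
    (u : ℝ → ℝ) (hu : ContDiff ℝ 2 u)
    (hlight : ∀ s, B (deriv γ s) (deriv γ s) = 0) :
    ∀ t, B (iteratedDeriv 2 (γ ∘ u) t) (iteratedDeriv 2 (γ ∘ u) t)
        = (deriv u t) ^ 4 * B (iteratedDeriv 2 γ (u t)) (iteratedDeriv 2 γ (u t)) ∧
      |B (iteratedDeriv 2 (γ ∘ u) t) (iteratedDeriv 2 (γ ∘ u) t)| ^ ((1 : ℝ) / 4)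
        = |deriv u t| * |B (iteratedDeriv 2 γ (u t)) (iteratedDeriv 2 γ (u t))| ^ ((1 : ℝ) / 4) := by
  set Bc : (Fin m → ℝ) →L[ℝ] (Fin m → ℝ) →L[ℝ] ℝ :=
    LinearMap.toContinuousLinearMap
      ((LinearMap.toContinuousLinearMap :
        ((Fin m → ℝ) →ₗ[ℝ] ℝ) ≃ₗ[ℝ] ((Fin m → ℝ) →L[ℝ] ℝ)).toLinearMap.comp B) with hBc
  have hBcB : ∀ v w, Bc v w = B v w := fun v w => rfl
  -- differentiability facts
  have hγd : Differentiable ℝ γ := hγ.differentiable (by norm_num)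
  have hγ' : ContDiff ℝ 1 (deriv γ) := by
    have := (contDiff_succ_iff_deriv (n := 1)).mp (by exact_mod_cast hγ)
    exact this.2.2
  have hγ'd : Differentiable ℝ (deriv γ) := hγ'.differentiable one_ne_zero
  have hud : Differentiable ℝ u := hu.differentiable (by norm_num)
  have hu' : ContDiff ℝ 1 (deriv u) := by
    have := (contDiff_succ_iff_deriv (n := 1)).mp (by exact_mod_cast hu)
    exact this.2.2
  have hu'd : Differentiable ℝ (deriv u) := hu'.differentiable one_ne_zero
  -- B(γ', γ'') = 0
  have hlight' : ∀ s, B (deriv γ s) (deriv (deriv γ) s) = 0 := by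
    intro s
    have h1 : HasDerivAt (deriv γ) (deriv (deriv γ) s) s := (hγ'd s).hasDerivAt
    have h2 : HasDerivAt (fun y => Bc (deriv γ y)) (Bc (deriv (deriv γ) s)) s :=
      Bc.hasFDerivAt.comp_hasDerivAt s h1
    have h3 : HasDerivAt (fun y => Bc (deriv γ y) (deriv γ y))
        (Bc (deriv (deriv γ) s) (deriv γ s) + Bc (deriv γ s) (deriv (deriv γ) s)) s :=
      h2.clm_apply h1
    have h4 : (fun y => Bc (deriv γ y) (deriv γ y)) = fun _ => (0 : ℝ) := by
      funext y; rw [hBcB]; exact hlight y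
    rw [h4] at h3
    have h5 := h3.unique (hasDerivAt_const s 0)
    rw [hBcB, hBcB, hB (deriv (deriv γ) s)] at h5
    linarith
  intro t
  -- first derivative of γ ∘ u
  have hd1 : deriv (γ ∘ u) = fun s => deriv u s • deriv γ (u s) := by
    funext s
    exact (HasDerivAt.scomp s (hγd (u s)).hasDerivAt (hud s).hasDerivAt).deriv
  -- second derivative of γ ∘ u
  have hcomp : HasDerivAt (fun s => deriv γ (u s)) (deriv u t • deriv (deriv γ) (u t)) t :=
    HasDerivAt.scomp t (hγ'd (u t)).hasDerivAt (hud t).hasDerivAt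
  have h2d : HasDerivAt (fun s => deriv u s • deriv γ (u s))
      (deriv u t • (deriv u t • deriv (deriv γ) (u t)) + deriv (deriv u) t • deriv γ (u t)) t :=
    (hu'd t).hasDerivAt.smul hcomp
  have key : iteratedDeriv 2 (γ ∘ u) t
      = deriv u t • (deriv u t • deriv (deriv γ) (u t)) + deriv (deriv u) t • deriv γ (u t) := by
    rw [iteratedDeriv_succ, iteratedDeriv_one, hd1]
    exact h2d.deriv
  have keyγ : iteratedDeriv 2 γ (u t) = deriv (deriv γ) (u t) := by
    rw [iteratedDeriv_succ, iteratedDeriv_one]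
  set a := deriv u t
  set b := deriv (deriv u) t
  set v := deriv γ (u t)
  set w := deriv (deriv γ) (u t)
  have hvv : B v v = 0 := hlight (u t)
  have hvw : B v w = 0 := hlight' (u t)
  have hwv : B w v = 0 := by rw [← hB]; exact hvw
  have main : B (iteratedDeriv 2 (γ ∘ u) t) (iteratedDeriv 2 (γ ∘ u) t)
      = a ^ 4 * B (iteratedDeriv 2 γ (u t)) (iteratedDeriv 2 γ (u t)) := by
    rw [key, keyγ]
    simp only [map_add, map_smul, LinearMap.add_apply, LinearMap.smul_apply, smul_eq_mul,
      hvv, hvw, hwv]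
    ring
  refine ⟨main, ?_⟩
  rw [main, keyγ]
  rw [abs_mul, abs_pow]
  rcases le_or_gt (B w w) 0 with h | h
  · rw [Real.mul_rpow (by positivity) (abs_nonneg _), ← Real.rpow_natCast |a| 4,
      ← Real.rpow_mul (abs_nonneg _)]
    norm_num
  · rw [Real.mul_rpow (by positivity) (abs_nonneg _), ← Real.rpow_natCast |a| 4,
      ← Real.rpow_mul (abs_nonneg _)]
    norm_num
end

section
/- Let m̄ : I → ℝ₁^5 be a C^3 curve in the light cone with ⟨m̄', m̄'⟩ ≡ 1, and γ(s) = m̄(s) ∧ m̄'(s) ∧ m̄''(s). Then γ'(s) = m̄(s) ∧ m̄'(s) ∧ m̄'''(s), and ⟨γ'(s), γ'(s)⟩ = 0; that is, the curve of osculating circles γ is lightlike in Λ³ℝ₁^5. -/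
/-- The Minkowski form on ℝ₁⁵. -/
noncomputable def mink (x y : Fin 5 → ℝ) : ℝ :=
  -(x 0 * y 0) + x 1 * y 1 + x 2 * y 2 + x 3 * y 3 + x 4 * y 4

/-- The induced form on Λ³ℝ₁⁵ on pure 3-vectors. -/
noncomputable def tripleForm (x₁ x₂ x₃ y₁ y₂ y₃ : Fin 5 → ℝ) : ℝ :=
  - Matrix.det (Matrix.of fun i j : Fin 3 => mink (![x₁, x₂, x₃] i) (![y₁, y₂, y₃] j))

/-- Plücker coordinate p_{i₁i₂i₃} of the 3-vector x₁∧x₂∧x₃. -/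
noncomputable def plucker (x₁ x₂ x₃ : Fin 5 → ℝ) (i₁ i₂ i₃ : Fin 5) : ℝ :=
  Matrix.det (Matrix.of fun a b : Fin 3 => ![x₁, x₂, x₃] a (![i₁, i₂, i₃] b))

lemma mink_hasDerivAt {f g : ℝ → Fin 5 → ℝ} {f' g' : Fin 5 → ℝ} {s : ℝ}
    (hf : HasDerivAt f f' s) (hg : HasDerivAt g g' s) :
    HasDerivAt (fun t => mink (f t) (g t)) (mink f' (g s) + mink (f s) g') s := by
  rw [hasDerivAt_pi] at hf hg
  unfold mink
  convert (((((hf 0).fun_mul (hg 0)).fun_neg.fun_add ((hf 1).fun_mul (hg 1))).fun_add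
    ((hf 2).fun_mul (hg 2))).fun_add ((hf 3).fun_mul (hg 3))).fun_add ((hf 4).fun_mul (hg 4)) using 1 <;> try rfl
  ring

lemma const_of_deriv {F : ℝ → ℝ} {D : ℝ} {s : ℝ} {c : ℝ}
    (h : HasDerivAt F D s) (hc : ∀ t, F t = c) : D = 0 := by
  have : F = fun _ => c := funext hc
  subst this
  exact h.unique (hasDerivAt_const s c)

theorem osculating_circle_curve_lightlike (mb : ℝ → Fin 5 → ℝ)
    (hmb : ContDiff ℝ 3 mb)
    (hcone : ∀ s, mink (mb s) (mb s) = 0)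
    (hunit : ∀ s, mink (deriv mb s) (deriv mb s) = 1) :
    ∀ s, (∀ i₁ i₂ i₃ : Fin 5,
        deriv (fun t => plucker (mb t) (deriv mb t) (iteratedDeriv 2 mb t) i₁ i₂ i₃) s
          = plucker (mb s) (deriv mb s) (iteratedDeriv 3 mb s) i₁ i₂ i₃) ∧
      tripleForm (mb s) (deriv mb s) (iteratedDeriv 3 mb s)
        (mb s) (deriv mb s) (iteratedDeriv 3 mb s) = 0 := by
  -- smoothness chain
  have hc2 : ContDiff ℝ 2 (deriv mb) := by
    rw [show (3 : WithTop ℕ∞) = 2 + 1 by norm_num, contDiff_succ_iff_deriv] at hmb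
    exact hmb.2.2
  have hc1 : ContDiff ℝ 1 (deriv (deriv mb)) := by
    rw [show (2 : WithTop ℕ∞) = 1 + 1 by norm_num, contDiff_succ_iff_deriv] at hc2
    exact hc2.2.2
  have e2 : iteratedDeriv 2 mb = deriv (deriv mb) := by
    simp [iteratedDeriv_succ, iteratedDeriv_zero]
  have e3 : iteratedDeriv 3 mb = deriv (deriv (deriv mb)) := by
    simp [iteratedDeriv_succ, iteratedDeriv_zero]
  have H0 : ∀ t, HasDerivAt mb (deriv mb t) t := fun t =>
    ((hmb.differentiable (by norm_num)) t).hasDerivAt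
  have H1 : ∀ t, HasDerivAt (deriv mb) (iteratedDeriv 2 mb t) t := fun t => by
    rw [e2]; exact ((hc2.differentiable (by norm_num)) t).hasDerivAt
  have H2 : ∀ t, HasDerivAt (iteratedDeriv 2 mb) (iteratedDeriv 3 mb t) t := fun t => by
    rw [e2, e3]; exact ((hc1.differentiable (by norm_num)) t).hasDerivAt
  -- symmetry of mink
  have msymm : ∀ x y, mink x y = mink y x := fun x y => by unfold mink; ring
  -- scalar products
  have P1 : ∀ t, mink (mb t) (deriv mb t) = 0 := by
    intro t
    have h := const_of_deriv (mink_hasDerivAt (H0 t) (H0 t)) hcone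
    rw [msymm (deriv mb t) (mb t)] at h
    linarith
  have P2 : ∀ t, mink (mb t) (iteratedDeriv 2 mb t) = -1 := by
    intro t
    have h := const_of_deriv (mink_hasDerivAt (H0 t) (H1 t)) P1
    have := hunit t
    linarith
  have P3 : ∀ t, mink (deriv mb t) (iteratedDeriv 2 mb t) = 0 := by
    intro t
    have h := const_of_deriv (mink_hasDerivAt (H1 t) (H1 t)) hunit
    rw [msymm (iteratedDeriv 2 mb t) (deriv mb t)] at h
    linarith
  have P4 : ∀ t, mink (mb t) (iteratedDeriv 3 mb t) = 0 := by
    intro t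
    have h := const_of_deriv (mink_hasDerivAt (H0 t) (H2 t)) P2
    have := P3 t
    linarith
  intro s
  constructor
  · intro i₁ i₂ i₃
    have ha : ∀ (i : Fin 5) t, HasDerivAt (fun u => mb u i) (deriv mb t i) t :=
      fun i t => hasDerivAt_pi.mp (H0 t) i
    have hb : ∀ (i : Fin 5) t, HasDerivAt (fun u => deriv mb u i) (iteratedDeriv 2 mb t i) t :=
      fun i t => hasDerivAt_pi.mp (H1 t) i
    have hcd : ∀ (i : Fin 5) t,
        HasDerivAt (fun u => iteratedDeriv 2 mb u i) (iteratedDeriv 3 mb t i) t :=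
      fun i t => hasDerivAt_pi.mp (H2 t) i
    have key : HasDerivAt (fun t => plucker (mb t) (deriv mb t) (iteratedDeriv 2 mb t) i₁ i₂ i₃)
        (plucker (mb s) (deriv mb s) (iteratedDeriv 3 mb s) i₁ i₂ i₃) s := by
      simp only [plucker, Matrix.det_fin_three, Matrix.of_apply, Matrix.cons_val',
        Matrix.cons_val_zero, Matrix.cons_val_one, Matrix.head_cons, Matrix.head_fin_const,
        Matrix.cons_val_two, Matrix.tail_cons, Matrix.cons_val_fin_one, Matrix.empty_val']
      convert (((((((ha i₁ s).fun_mul (hb i₂ s)).fun_mul (hcd i₃ s)).fun_sub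
        ((((ha i₁ s).fun_mul (hb i₃ s)).fun_mul (hcd i₂ s)))).fun_sub
        ((((ha i₂ s).fun_mul (hb i₁ s)).fun_mul (hcd i₃ s)))).fun_add
        ((((ha i₃ s).fun_mul (hb i₁ s)).fun_mul (hcd i₂ s)))).fun_add
        (((((ha i₂ s).fun_mul (hb i₃ s)).fun_mul (hcd i₁ s))).fun_sub
        ((((ha i₃ s).fun_mul (hb i₂ s)).fun_mul (hcd i₁ s))))) using 1 <;> try rfl
      · funext t; ring
      · ring
    rw [key.deriv]
  · have h00 := hcone s
    have h01 := P1 s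
    have h03 := P4 s
    unfold tripleForm
    rw [Matrix.det_fin_three]
    simp only [Matrix.of_apply, Matrix.cons_val', Matrix.cons_val_zero, Matrix.cons_val_one,
      Matrix.head_cons, Matrix.head_fin_const, Matrix.cons_val_two, Matrix.tail_cons,
      Matrix.cons_val_fin_one, Matrix.empty_val']
    rw [h00, h01, h03]
    ring
end

section
/- Let m : I → ℝ³ be a C^4 arc-length parametrized curve with curvature κ and torsion τ, m̄ its light-cone lift in ℝ₁^5, and γ = m̄ ∧ m̄' ∧ m̄'' the curve of osculating circles. Then ⟨γ''(s), γ''(s)⟩ = κ'(s)² + κ(s)²τ(s)². In particular the 1/2-dimensional length element |⟨γ'',γ''⟩|^{1/4} ds equals the conformal arc-length element (κ'² + κ²τ²)^{1/4} ds. -/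
/-- The lift m̄(x) = (1 + (x·x)/4, -1 + (x·x)/4, x) of ℝ³ into the light cone of ℝ₁⁵. -/
noncomputable def mbar (x : Fin 3 → ℝ) : Fin 5 → ℝ :=
  Fin.cons (1 + (∑ i, x i * x i) / 4) (Fin.cons (-1 + (∑ i, x i * x i) / 4) x)

/-- The Plücker coordinates of the curve of osculating circles γ = m̄ ∧ m̄' ∧ m̄''. -/
noncomputable def gammaCoord (m : ℝ → Fin 3 → ℝ) (s : ℝ) (i₁ i₂ i₃ : Fin 5) : ℝ :=
  plucker (mbar (m s)) (deriv (fun t => mbar (m t)) s)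
    (iteratedDeriv 2 (fun t => mbar (m t)) s) i₁ i₂ i₃

/-! ### Auxiliary machinery -/

noncomputable def det3 (a b c d e f g h i : ℝ) : ℝ :=
  a*(e*i - f*h) - b*(d*i - f*g) + c*(d*h - e*g)

theorem pi_comp {n : ℕ} {f : ℝ → Fin n → ℝ} (hf : ContDiff ℝ 4 f) :
    ∀ k, k ≤ 4 → ∀ (t : ℝ) (i : Fin n), iteratedDeriv k f t i = iteratedDeriv k (fun u => f u i) t := by
  intro k
  induction k with
  | zero => intro _ t i; simp [iteratedDeriv_zero]
  | succ k ih =>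
    intro hk t i
    have hk4 : k < 4 := by omega
    have hd : Differentiable ℝ (iteratedDeriv k f) :=
      hf.differentiable_iteratedDeriv k (by exact_mod_cast hk4)
    rw [iteratedDeriv_succ]
    have h1 : deriv (iteratedDeriv k f) t i = deriv (fun u => iteratedDeriv k f u i) t :=
      ((hasDerivAt_pi.mp (hd t).hasDerivAt) i).deriv.symm
    rw [h1]
    have h2 : (fun u => iteratedDeriv k f u i) = fun u => iteratedDeriv k (fun v => f v i) u := by
      funext u; exact ih (by omega) u i
    rw [h2, ← iteratedDeriv_succ]

theorem hdi {p : ℝ → ℝ} (hp : ContDiff ℝ 4 p) (k : ℕ) (hk : k < 4) (t : ℝ) :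
    HasDerivAt (iteratedDeriv k p) (iteratedDeriv (k+1) p t) t := by
  have hd : Differentiable ℝ (iteratedDeriv k p) :=
    hp.differentiable_iteratedDeriv k (by exact_mod_cast hk)
  simpa [iteratedDeriv_succ] using (hd t).hasDerivAt

theorem iter_chain {n : ℕ} (c : ℕ → ℝ → ℝ)
    (h : ∀ k, k < n → ∀ t, HasDerivAt (c k) (c (k+1) t) t) :
    ∀ k, k ≤ n → iteratedDeriv k (c 0) = c k := by
  intro k
  induction k with
  | zero => intro _; simp [iteratedDeriv_zero]
  | succ k ih =>
    intro hk
    rw [iteratedDeriv_succ, ih (by omega)]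
    exact funext fun t => (h k (by omega) t).deriv

theorem plucker_eq (x₁ x₂ x₃ : Fin 5 → ℝ) (i₁ i₂ i₃ : Fin 5) :
    plucker x₁ x₂ x₃ i₁ i₂ i₃
      = x₁ i₁ * (x₂ i₂ * x₃ i₃ - x₂ i₃ * x₃ i₂)
      - x₂ i₁ * (x₁ i₂ * x₃ i₃ - x₁ i₃ * x₃ i₂)
      + x₃ i₁ * (x₁ i₂ * x₂ i₃ - x₁ i₃ * x₂ i₂) := by
  simp [plucker, Matrix.det_fin_three]; ring

set_option maxRecDepth 10000 in
theorem sum_triples (F : Fin 5 → Fin 5 → Fin 5 → ℝ) :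
    (∑ i₁ : Fin 5, ∑ i₂ : Fin 5, ∑ i₃ : Fin 5,
      if i₁ < i₂ ∧ i₂ < i₃ then (if i₁ = 0 then (1:ℝ) else -1) * F i₁ i₂ i₃ else 0)
    = F 0 1 2 + F 0 1 3 + F 0 1 4 + F 0 2 3 + F 0 2 4 + F 0 3 4
      - F 1 2 3 - F 1 2 4 - F 1 3 4 - F 2 3 4 := by
  simp only [Fin.sum_univ_five]
  simp (config := { decide := true }) only [ite_true, ite_false]
  ring

set_option maxRecDepth 10000 in
set_option maxHeartbeats 2000000 in
theorem key (u v w v' w' : Fin 5 → ℝ) :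
    (∑ i₁ : Fin 5, ∑ i₂ : Fin 5, ∑ i₃ : Fin 5,
      if i₁ < i₂ ∧ i₂ < i₃ then
        (if i₁ = 0 then (1 : ℝ) else -1) *
          (plucker u v w i₁ i₂ i₃ + plucker u v' w' i₁ i₂ i₃) ^ 2
      else 0)
    = -( det3 (mink u u) (mink u v) (mink u w) (mink v u) (mink v v) (mink v w)
            (mink w u) (mink w v) (mink w w)
      + 2 * det3 (mink u u) (mink u v') (mink u w') (mink v u) (mink v v') (mink v w')
            (mink w u) (mink w v') (mink w w')
      + det3 (mink u u) (mink u v') (mink u w') (mink v' u) (mink v' v') (mink v' w')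
            (mink w' u) (mink w' v') (mink w' w')) := by
  rw [sum_triples (fun i₁ i₂ i₃ => (plucker u v w i₁ i₂ i₃ + plucker u v' w' i₁ i₂ i₃) ^ 2)]
  simp only [plucker_eq, mink, det3]
  ring

theorem det3_dd (p q r : ℝ → ℝ) (hp : ContDiff ℝ 4 p) (hq : ContDiff ℝ 4 q)
    (hr : ContDiff ℝ 4 r) (s : ℝ) :
    iteratedDeriv 2 (fun t => det3 (p t) (q t) (r t) (deriv p t) (deriv q t) (deriv r t)
        (iteratedDeriv 2 p t) (iteratedDeriv 2 q t) (iteratedDeriv 2 r t)) s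
    = det3 (p s) (q s) (r s) (iteratedDeriv 2 p s) (iteratedDeriv 2 q s) (iteratedDeriv 2 r s)
        (iteratedDeriv 3 p s) (iteratedDeriv 3 q s) (iteratedDeriv 3 r s)
    + det3 (p s) (q s) (r s) (deriv p s) (deriv q s) (deriv r s)
        (iteratedDeriv 4 p s) (iteratedDeriv 4 q s) (iteratedDeriv 4 r s) := by
  have hP : ∀ k < 4, ∀ t : ℝ, HasDerivAt (iteratedDeriv k p) (iteratedDeriv (k+1) p t) t :=
    fun k hk t => hdi hp k hk t
  have hQ : ∀ k < 4, ∀ t : ℝ, HasDerivAt (iteratedDeriv k q) (iteratedDeriv (k+1) q t) t :=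
    fun k hk t => hdi hq k hk t
  have hR : ∀ k < 4, ∀ t : ℝ, HasDerivAt (iteratedDeriv k r) (iteratedDeriv (k+1) r t) t :=
    fun k hk t => hdi hr k hk t
  have e1 : (fun t => det3 (p t) (q t) (r t) (deriv p t) (deriv q t) (deriv r t)
        (iteratedDeriv 2 p t) (iteratedDeriv 2 q t) (iteratedDeriv 2 r t))
      = fun t => iteratedDeriv 0 p t * (iteratedDeriv 1 q t * iteratedDeriv 2 r t
            - iteratedDeriv 2 q t * iteratedDeriv 1 r t)
        - iteratedDeriv 0 q t * (iteratedDeriv 1 p t * iteratedDeriv 2 r t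
            - iteratedDeriv 2 p t * iteratedDeriv 1 r t)
        + iteratedDeriv 0 r t * (iteratedDeriv 1 p t * iteratedDeriv 2 q t
            - iteratedDeriv 2 p t * iteratedDeriv 1 q t) := by
    funext t; simp [det3, iteratedDeriv_one]; ring
  rw [e1]
  have hW : ∀ t : ℝ, HasDerivAt (fun t => iteratedDeriv 0 p t * (iteratedDeriv 1 q t * iteratedDeriv 2 r t
            - iteratedDeriv 2 q t * iteratedDeriv 1 r t)
        - iteratedDeriv 0 q t * (iteratedDeriv 1 p t * iteratedDeriv 2 r t
            - iteratedDeriv 2 p t * iteratedDeriv 1 r t)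
        + iteratedDeriv 0 r t * (iteratedDeriv 1 p t * iteratedDeriv 2 q t
            - iteratedDeriv 2 p t * iteratedDeriv 1 q t))
      (iteratedDeriv 0 p t * (iteratedDeriv 1 q t * iteratedDeriv 3 r t
            - iteratedDeriv 3 q t * iteratedDeriv 1 r t)
        - iteratedDeriv 0 q t * (iteratedDeriv 1 p t * iteratedDeriv 3 r t
            - iteratedDeriv 3 p t * iteratedDeriv 1 r t)
        + iteratedDeriv 0 r t * (iteratedDeriv 1 p t * iteratedDeriv 3 q t
            - iteratedDeriv 3 p t * iteratedDeriv 1 q t)) t := by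
    intro t
    have A := (hP 0 (by norm_num) t).mul (((hQ 1 (by norm_num) t).mul (hR 2 (by norm_num) t)).sub
      ((hQ 2 (by norm_num) t).mul (hR 1 (by norm_num) t)))
    have B := (hQ 0 (by norm_num) t).mul (((hP 1 (by norm_num) t).mul (hR 2 (by norm_num) t)).sub
      ((hP 2 (by norm_num) t).mul (hR 1 (by norm_num) t)))
    have C := (hR 0 (by norm_num) t).mul (((hP 1 (by norm_num) t).mul (hQ 2 (by norm_num) t)).sub
      ((hP 2 (by norm_num) t).mul (hQ 1 (by norm_num) t)))
    convert (A.sub B).add C using 1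
    any_goals with_reducible_and_instances rfl
    norm_num
    ring
  have hE : ∀ t : ℝ, HasDerivAt (fun t => iteratedDeriv 0 p t * (iteratedDeriv 1 q t * iteratedDeriv 3 r t
            - iteratedDeriv 3 q t * iteratedDeriv 1 r t)
        - iteratedDeriv 0 q t * (iteratedDeriv 1 p t * iteratedDeriv 3 r t
            - iteratedDeriv 3 p t * iteratedDeriv 1 r t)
        + iteratedDeriv 0 r t * (iteratedDeriv 1 p t * iteratedDeriv 3 q t
            - iteratedDeriv 3 p t * iteratedDeriv 1 q t))
      ((iteratedDeriv 0 p t * (iteratedDeriv 2 q t * iteratedDeriv 3 r t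
            - iteratedDeriv 3 q t * iteratedDeriv 2 r t)
        - iteratedDeriv 0 q t * (iteratedDeriv 2 p t * iteratedDeriv 3 r t
            - iteratedDeriv 3 p t * iteratedDeriv 2 r t)
        + iteratedDeriv 0 r t * (iteratedDeriv 2 p t * iteratedDeriv 3 q t
            - iteratedDeriv 3 p t * iteratedDeriv 2 q t))
       + (iteratedDeriv 0 p t * (iteratedDeriv 1 q t * iteratedDeriv 4 r t
            - iteratedDeriv 4 q t * iteratedDeriv 1 r t)
        - iteratedDeriv 0 q t * (iteratedDeriv 1 p t * iteratedDeriv 4 r t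
            - iteratedDeriv 4 p t * iteratedDeriv 1 r t)
        + iteratedDeriv 0 r t * (iteratedDeriv 1 p t * iteratedDeriv 4 q t
            - iteratedDeriv 4 p t * iteratedDeriv 1 q t))) t := by
    intro t
    have A := (hP 0 (by norm_num) t).mul (((hQ 1 (by norm_num) t).mul (hR 3 (by norm_num) t)).sub
      ((hQ 3 (by norm_num) t).mul (hR 1 (by norm_num) t)))
    have B := (hQ 0 (by norm_num) t).mul (((hP 1 (by norm_num) t).mul (hR 3 (by norm_num) t)).sub
      ((hP 3 (by norm_num) t).mul (hR 1 (by norm_num) t)))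
    have C := (hR 0 (by norm_num) t).mul (((hP 1 (by norm_num) t).mul (hQ 3 (by norm_num) t)).sub
      ((hP 3 (by norm_num) t).mul (hQ 1 (by norm_num) t)))
    convert (A.sub B).add C using 1
    any_goals with_reducible_and_instances rfl
    norm_num
    ring
  have hdW : deriv (fun t => iteratedDeriv 0 p t * (iteratedDeriv 1 q t * iteratedDeriv 2 r t
            - iteratedDeriv 2 q t * iteratedDeriv 1 r t)
        - iteratedDeriv 0 q t * (iteratedDeriv 1 p t * iteratedDeriv 2 r t
            - iteratedDeriv 2 p t * iteratedDeriv 1 r t)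
        + iteratedDeriv 0 r t * (iteratedDeriv 1 p t * iteratedDeriv 2 q t
            - iteratedDeriv 2 p t * iteratedDeriv 1 q t))
      = fun t => iteratedDeriv 0 p t * (iteratedDeriv 1 q t * iteratedDeriv 3 r t
            - iteratedDeriv 3 q t * iteratedDeriv 1 r t)
        - iteratedDeriv 0 q t * (iteratedDeriv 1 p t * iteratedDeriv 3 r t
            - iteratedDeriv 3 p t * iteratedDeriv 1 r t)
        + iteratedDeriv 0 r t * (iteratedDeriv 1 p t * iteratedDeriv 3 q t
            - iteratedDeriv 3 p t * iteratedDeriv 1 q t) := funext fun t => (hW t).deriv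
  rw [show (2 : ℕ) = 1 + 1 from rfl, iteratedDeriv_succ, iteratedDeriv_one, hdW]
  rw [(hE s).deriv]
  simp [det3, iteratedDeriv_one]
  ring

/-! ### Components of the curve and the lift -/

noncomputable def Dm (m : ℝ → Fin 3 → ℝ) (k : ℕ) (j : Fin 3) : ℝ → ℝ :=
  iteratedDeriv k (fun t => m t j)

noncomputable def qfun (m : ℝ → Fin 3 → ℝ) : ℕ → ℝ → ℝ
  | 0 => fun t => (Dm m 0 0 t * Dm m 0 0 t + Dm m 0 1 t * Dm m 0 1 t + Dm m 0 2 t * Dm m 0 2 t) / 4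
  | 1 => fun t => (Dm m 0 0 t * Dm m 1 0 t + Dm m 0 1 t * Dm m 1 1 t + Dm m 0 2 t * Dm m 1 2 t) / 2
  | 2 => fun t => (Dm m 1 0 t * Dm m 1 0 t + Dm m 1 1 t * Dm m 1 1 t + Dm m 1 2 t * Dm m 1 2 t
      + Dm m 0 0 t * Dm m 2 0 t + Dm m 0 1 t * Dm m 2 1 t + Dm m 0 2 t * Dm m 2 2 t) / 2
  | 3 => fun t => (3 * (Dm m 1 0 t * Dm m 2 0 t + Dm m 1 1 t * Dm m 2 1 t + Dm m 1 2 t * Dm m 2 2 t)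
      + Dm m 0 0 t * Dm m 3 0 t + Dm m 0 1 t * Dm m 3 1 t + Dm m 0 2 t * Dm m 3 2 t) / 2
  | 4 => fun t => (3 * (Dm m 2 0 t * Dm m 2 0 t + Dm m 2 1 t * Dm m 2 1 t + Dm m 2 2 t * Dm m 2 2 t)
      + 4 * (Dm m 1 0 t * Dm m 3 0 t + Dm m 1 1 t * Dm m 3 1 t + Dm m 1 2 t * Dm m 3 2 t)
      + Dm m 0 0 t * Dm m 4 0 t + Dm m 0 1 t * Dm m 4 1 t + Dm m 0 2 t * Dm m 4 2 t) / 2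
  | _ => 0

noncomputable def gg (m : ℝ → Fin 3 → ℝ) (i : Fin 5) : ℝ → ℝ := fun t => mbar (m t) i

section Curve

variable {m : ℝ → Fin 3 → ℝ}

theorem hmu (hm : ContDiff ℝ 4 m) (j : Fin 3) : ContDiff ℝ 4 (fun t => m t j) := contDiff_pi.mp hm j

theorem hDm (hm : ContDiff ℝ 4 m) (k : ℕ) (hk : k < 4) (j : Fin 3) (t : ℝ) :
    HasDerivAt (Dm m k j) (Dm m (k+1) j t) t := hdi (hmu hm j) k hk t

theorem hq_chain (hm : ContDiff ℝ 4 m) (k : ℕ) (hk : k < 4) (t : ℝ) :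
    HasDerivAt (qfun m k) (qfun m (k+1) t) t := by
  have h := fun (a : ℕ) (ha : a < 4) (j : Fin 3) => hDm hm a ha j t
  have h0 := h 0 (by norm_num); have h1 := h 1 (by norm_num)
  have h2 := h 2 (by norm_num); have h3 := h 3 (by norm_num)
  interval_cases k
  · have H := (((h0 0).mul (h0 0)).add (((h0 1).mul (h0 1)).add ((h0 2).mul (h0 2)))).div_const 4
    convert H using 1
    any_goals with_reducible_and_instances rfl
    · funext u; simp [qfun]; ring
    · norm_num [qfun]; ring
  · have H := (((h0 0).mul (h1 0)).add (((h0 1).mul (h1 1)).add ((h0 2).mul (h1 2)))).div_const 2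
    convert H using 1
    any_goals with_reducible_and_instances rfl
    · funext u; simp [qfun]; ring
    · norm_num [qfun]; ring
  · have H := ((((h1 0).mul (h1 0)).add (((h1 1).mul (h1 1)).add ((h1 2).mul (h1 2)))).add
      (((h0 0).mul (h2 0)).add (((h0 1).mul (h2 1)).add ((h0 2).mul (h2 2))))).div_const 2
    convert H using 1
    any_goals with_reducible_and_instances rfl
    · funext u; simp [qfun]; ring
    · norm_num [qfun]; ring
  · have H := (((((h1 0).mul (h2 0)).add (((h1 1).mul (h2 1)).add ((h1 2).mul (h2 2)))).const_mul 3).add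
      (((h0 0).mul (h3 0)).add (((h0 1).mul (h3 1)).add ((h0 2).mul (h3 2))))).div_const 2
    convert H using 1
    any_goals with_reducible_and_instances rfl
    · funext u; simp [qfun]; ring
    · norm_num [qfun]; ring

theorem iter_qfun (hm : ContDiff ℝ 4 m) (k : ℕ) (hk : k ≤ 4) : iteratedDeriv k (qfun m 0) = qfun m k :=
  iter_chain (qfun m) (fun k hk t => hq_chain hm k hk t) k hk

end Curve

section Curve2

variable {m : ℝ → Fin 3 → ℝ}

theorem gg_eq0 : gg m 0 = fun t => 1 + qfun m 0 t := by
  funext t; simp [gg, mbar, qfun, Dm, Fin.sum_univ_three, iteratedDeriv_zero]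

theorem gg_eq1 : gg m 1 = fun t => -1 + qfun m 0 t := by
  funext t; simp [gg, mbar, qfun, Dm, Fin.sum_univ_three, iteratedDeriv_zero]

theorem gg_eq2 : gg m 2 = Dm m 0 0 := by
  funext t; simp [gg, Dm, iteratedDeriv_zero]; rfl

theorem gg_eq3 : gg m 3 = Dm m 0 1 := by
  funext t; simp [gg, Dm, iteratedDeriv_zero]; rfl

theorem gg_eq4 : gg m 4 = Dm m 0 2 := by
  funext t; simp [gg, Dm, iteratedDeriv_zero]; rfl

theorem hgg (hm : ContDiff ℝ 4 m) (i : Fin 5) : ContDiff ℝ 4 (gg m i) := by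
  have h : ∀ j : Fin 3, ContDiff ℝ 4 (Dm m 0 j) := by
    intro j; rw [show Dm m 0 j = fun t => m t j from iteratedDeriv_zero]; exact hmu hm j
  have hq : ContDiff ℝ 4 (qfun m 0) := by
    have : qfun m 0 = fun t => (Dm m 0 0 t * Dm m 0 0 t + (Dm m 0 1 t * Dm m 0 1 t
        + Dm m 0 2 t * Dm m 0 2 t)) / 4 := by funext t; simp [qfun]; ring
    rw [this]
    exact (((h 0).mul (h 0)).add (((h 1).mul (h 1)).add ((h 2).mul (h 2)))).div_const 4
  have g0 : ContDiff ℝ 4 (gg m 0) := by rw [gg_eq0]; exact contDiff_const.add hq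
  have g1 : ContDiff ℝ 4 (gg m 1) := by rw [gg_eq1]; exact contDiff_const.add hq
  have g2 : ContDiff ℝ 4 (gg m 2) := by rw [gg_eq2]; exact h 0
  have g3 : ContDiff ℝ 4 (gg m 3) := by rw [gg_eq3]; exact h 1
  have g4 : ContDiff ℝ 4 (gg m 4) := by rw [gg_eq4]; exact h 2
  fin_cases i
  · exact g0
  · exact g1
  · exact g2
  · exact g3
  · exact g4

theorem iter_gg0 (hm : ContDiff ℝ 4 m) (k : ℕ) (h1 : 1 ≤ k) (h4 : k ≤ 4) :
    iteratedDeriv k (gg m 0) = qfun m k := by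
  have hchain : ∀ j, j < 4 → ∀ t, HasDerivAt
      ((fun j => if j = 0 then gg m 0 else qfun m j) j)
      ((fun j => if j = 0 then gg m 0 else qfun m j) (j+1) t) t := by
    intro j hj t
    match j with
    | 0 =>
      simp only [if_pos rfl, if_neg (by omega : (0:ℕ)+1 ≠ 0)]
      rw [gg_eq0]
      simpa using (hq_chain hm 0 (by norm_num) t).const_add 1
    | j+1 =>
      simp only [if_neg (by omega : j+1 ≠ 0), if_neg (by omega : j+1+1 ≠ 0)]
      exact hq_chain hm (j+1) hj t
  have H := iter_chain _ hchain k h4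
  simp only [if_pos rfl] at H
  rw [if_neg (by omega : k ≠ 0)] at H
  exact H

theorem iter_gg1 (hm : ContDiff ℝ 4 m) (k : ℕ) (h1 : 1 ≤ k) (h4 : k ≤ 4) :
    iteratedDeriv k (gg m 1) = qfun m k := by
  have hchain : ∀ j, j < 4 → ∀ t, HasDerivAt
      ((fun j => if j = 0 then gg m 1 else qfun m j) j)
      ((fun j => if j = 0 then gg m 1 else qfun m j) (j+1) t) t := by
    intro j hj t
    match j with
    | 0 =>
      simp only [if_pos rfl, if_neg (by omega : (0:ℕ)+1 ≠ 0)]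
      rw [gg_eq1]
      simpa using (hq_chain hm 0 (by norm_num) t).const_add (-1)
    | j+1 =>
      simp only [if_neg (by omega : j+1 ≠ 0), if_neg (by omega : j+1+1 ≠ 0)]
      exact hq_chain hm (j+1) hj t
  have H := iter_chain _ hchain k h4
  simp only [if_pos rfl] at H
  rw [if_neg (by omega : k ≠ 0)] at H
  exact H

theorem iter_gg2 (k : ℕ) : iteratedDeriv k (gg m 2) = Dm m k 0 := by
  rw [gg_eq2]; show iteratedDeriv k (iteratedDeriv 0 _) = _; rw [iteratedDeriv_zero]; rfl

theorem iter_gg3 (k : ℕ) : iteratedDeriv k (gg m 3) = Dm m k 1 := by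
  rw [gg_eq3]; show iteratedDeriv k (iteratedDeriv 0 _) = _; rw [iteratedDeriv_zero]; rfl

theorem iter_gg4 (k : ℕ) : iteratedDeriv k (gg m 4) = Dm m k 2 := by
  rw [gg_eq4]; show iteratedDeriv k (iteratedDeriv 0 _) = _; rw [iteratedDeriv_zero]; rfl

theorem relA (hm : ContDiff ℝ 4 m) (harc : ∀ s, ∑ i, deriv m s i * deriv m s i = 1) (t : ℝ) :
    Dm m 1 0 t * Dm m 1 0 t + Dm m 1 1 t * Dm m 1 1 t + Dm m 1 2 t * Dm m 1 2 t = 1 := by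
  have h := harc t
  rw [Fin.sum_univ_three] at h
  have hc : ∀ j : Fin 3, deriv m t j = Dm m 1 j t := by
    intro j
    have h2 := pi_comp hm 1 (by norm_num) t j
    simpa [Dm, iteratedDeriv_one] using h2
  rw [hc 0, hc 1, hc 2] at h
  exact h

theorem relK (hm : ContDiff ℝ 4 m) {κ : ℝ → ℝ}
    (hκ : ∀ s, ∑ i, iteratedDeriv 2 m s i * iteratedDeriv 2 m s i = κ s ^ 2) (t : ℝ) :
    Dm m 2 0 t * Dm m 2 0 t + Dm m 2 1 t * Dm m 2 1 t + Dm m 2 2 t * Dm m 2 2 t = κ t ^ 2 := by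
  have h := hκ t
  rw [Fin.sum_univ_three] at h
  have hc : ∀ j : Fin 3, iteratedDeriv 2 m t j = Dm m 2 j t :=
    fun j => pi_comp hm 2 (by norm_num) t j
  rw [hc 0, hc 1, hc 2] at h
  exact h

theorem relT (hm : ContDiff ℝ 4 m) {κ τ : ℝ → ℝ}
    (hτ : ∀ s, ∑ i, iteratedDeriv 3 m s i * iteratedDeriv 3 m s i
        = κ s ^ 4 + (deriv κ s) ^ 2 + κ s ^ 2 * τ s ^ 2) (t : ℝ) :
    Dm m 3 0 t * Dm m 3 0 t + Dm m 3 1 t * Dm m 3 1 t + Dm m 3 2 t * Dm m 3 2 t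
      = κ t ^ 4 + (deriv κ t) ^ 2 + κ t ^ 2 * τ t ^ 2 := by
  have h := hτ t
  rw [Fin.sum_univ_three] at h
  have hc : ∀ j : Fin 3, iteratedDeriv 3 m t j = Dm m 3 j t :=
    fun j => pi_comp hm 3 (by norm_num) t j
  rw [hc 0, hc 1, hc 2] at h
  exact h

theorem relB (hm : ContDiff ℝ 4 m) (harc : ∀ s, ∑ i, deriv m s i * deriv m s i = 1) (t : ℝ) :
    Dm m 1 0 t * Dm m 2 0 t + Dm m 1 1 t * Dm m 2 1 t + Dm m 1 2 t * Dm m 2 2 t = 0 := by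
  have h := fun (a : ℕ) (ha : a < 4) (j : Fin 3) (u : ℝ) => hDm hm a ha j u
  have h1 := h 1 (by norm_num); have h2 := h 2 (by norm_num)
  have H2 : HasDerivAt (fun u => Dm m 1 0 u * Dm m 1 0 u + Dm m 1 1 u * Dm m 1 1 u
      + Dm m 1 2 u * Dm m 1 2 u)
      (2 * (Dm m 1 0 t * Dm m 2 0 t + Dm m 1 1 t * Dm m 2 1 t + Dm m 1 2 t * Dm m 2 2 t)) t := by
    have := (((h1 0 t).mul (h1 0 t)).add (((h1 1 t).mul (h1 1 t)).add ((h1 2 t).mul (h1 2 t))))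
    convert this using 1
    any_goals with_reducible_and_instances rfl
    · funext u; simp only [Pi.add_apply, Pi.mul_apply]; ring
    · norm_num; ring
  have H1 : HasDerivAt (fun u => Dm m 1 0 u * Dm m 1 0 u + Dm m 1 1 u * Dm m 1 1 u
      + Dm m 1 2 u * Dm m 1 2 u) 0 t := by
    have hconst : (fun u => Dm m 1 0 u * Dm m 1 0 u + Dm m 1 1 u * Dm m 1 1 u
        + Dm m 1 2 u * Dm m 1 2 u) = fun _ => (1:ℝ) := funext (relA hm harc)
    rw [hconst]; exact hasDerivAt_const t 1
  have := H1.unique H2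
  linarith

theorem relC (hm : ContDiff ℝ 4 m) {κ : ℝ → ℝ}
    (harc : ∀ s, ∑ i, deriv m s i * deriv m s i = 1)
    (hκ : ∀ s, ∑ i, iteratedDeriv 2 m s i * iteratedDeriv 2 m s i = κ s ^ 2) (t : ℝ) :
    Dm m 1 0 t * Dm m 3 0 t + Dm m 1 1 t * Dm m 3 1 t + Dm m 1 2 t * Dm m 3 2 t = -(κ t ^ 2) := by
  have h := fun (a : ℕ) (ha : a < 4) (j : Fin 3) (u : ℝ) => hDm hm a ha j u
  have h1 := h 1 (by norm_num); have h2 := h 2 (by norm_num); have h3 := h 3 (by norm_num)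
  have H2 : HasDerivAt (fun u => Dm m 1 0 u * Dm m 2 0 u + Dm m 1 1 u * Dm m 2 1 u
      + Dm m 1 2 u * Dm m 2 2 u)
      ((Dm m 2 0 t * Dm m 2 0 t + Dm m 2 1 t * Dm m 2 1 t + Dm m 2 2 t * Dm m 2 2 t)
       + (Dm m 1 0 t * Dm m 3 0 t + Dm m 1 1 t * Dm m 3 1 t + Dm m 1 2 t * Dm m 3 2 t)) t := by
    have := (((h1 0 t).mul (h2 0 t)).add (((h1 1 t).mul (h2 1 t)).add ((h1 2 t).mul (h2 2 t))))
    convert this using 1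
    any_goals with_reducible_and_instances rfl
    · funext u; simp only [Pi.add_apply, Pi.mul_apply]; ring
    · norm_num; ring
  have H1 : HasDerivAt (fun u => Dm m 1 0 u * Dm m 2 0 u + Dm m 1 1 u * Dm m 2 1 u
      + Dm m 1 2 u * Dm m 2 2 u) 0 t := by
    have hconst : (fun u => Dm m 1 0 u * Dm m 2 0 u + Dm m 1 1 u * Dm m 2 1 u
        + Dm m 1 2 u * Dm m 2 2 u) = fun _ => (0:ℝ) := funext (relB hm harc)
    rw [hconst]; exact hasDerivAt_const t 0
  have hu := H1.unique H2
  have hk := relK hm hκ t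
  linarith

end Curve2

set_option maxHeartbeats 2000000 in
theorem conformal_arclength_via_osculating_circles
    (m : ℝ → Fin 3 → ℝ) (κ τ : ℝ → ℝ) (hm : ContDiff ℝ 4 m)
    (harc : ∀ s, ∑ i, deriv m s i * deriv m s i = 1)
    (hκ : ∀ s, ∑ i, iteratedDeriv 2 m s i * iteratedDeriv 2 m s i = κ s ^ 2)
    (hτ : ∀ s, ∑ i, iteratedDeriv 3 m s i * iteratedDeriv 3 m s i
        = κ s ^ 4 + (deriv κ s) ^ 2 + κ s ^ 2 * τ s ^ 2) :
    ∀ s, (∑ i₁ : Fin 5, ∑ i₂ : Fin 5, ∑ i₃ : Fin 5,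
          if i₁ < i₂ ∧ i₂ < i₃ then
            (if i₁ = 0 then (1 : ℝ) else -1) *
              (iteratedDeriv 2 (fun t => gammaCoord m t i₁ i₂ i₃) s) ^ 2
          else 0)
        = (deriv κ s) ^ 2 + κ s ^ 2 * τ s ^ 2 ∧
      |(∑ i₁ : Fin 5, ∑ i₂ : Fin 5, ∑ i₃ : Fin 5,
          if i₁ < i₂ ∧ i₂ < i₃ then
            (if i₁ = 0 then (1 : ℝ) else -1) *
              (iteratedDeriv 2 (fun t => gammaCoord m t i₁ i₂ i₃) s) ^ 2
          else 0)| ^ ((1 : ℝ) / 4)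
        = ((deriv κ s) ^ 2 + κ s ^ 2 * τ s ^ 2) ^ ((1 : ℝ) / 4) := by
  intro s
  have hF : ContDiff ℝ 4 (fun t => mbar (m t)) := contDiff_pi.mpr (hgg hm)
  have hdd : ∀ i₁ i₂ i₃ : Fin 5, iteratedDeriv 2 (fun t => gammaCoord m t i₁ i₂ i₃) s
      = plucker (fun i => gg m i s) (fun i => iteratedDeriv 2 (gg m i) s)
          (fun i => iteratedDeriv 3 (gg m i) s) i₁ i₂ i₃
        + plucker (fun i => gg m i s) (fun i => deriv (gg m i) s)
          (fun i => iteratedDeriv 4 (gg m i) s) i₁ i₂ i₃ := by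
    intro i₁ i₂ i₃
    have hfun : (fun t => gammaCoord m t i₁ i₂ i₃)
        = fun t => det3 (gg m i₁ t) (gg m i₂ t) (gg m i₃ t)
            (deriv (gg m i₁) t) (deriv (gg m i₂) t) (deriv (gg m i₃) t)
            (iteratedDeriv 2 (gg m i₁) t) (iteratedDeriv 2 (gg m i₂) t)
            (iteratedDeriv 2 (gg m i₃) t) := by
      funext t
      have c1 : ∀ i : Fin 5, deriv (fun u => mbar (m u)) t i = deriv (gg m i) t := by
        intro i
        have h2 := pi_comp hF 1 (by norm_num) t i
        simp only [iteratedDeriv_one] at h2; exact h2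
      have c2 : ∀ i : Fin 5, iteratedDeriv 2 (fun u => mbar (m u)) t i
          = iteratedDeriv 2 (gg m i) t := fun i => pi_comp hF 2 (by norm_num) t i
      rw [gammaCoord, plucker_eq, c1 i₁, c1 i₂, c1 i₃, c2 i₁, c2 i₂, c2 i₃]
      simp only [det3, gg]
      ring
    rw [hfun, det3_dd _ _ _ (hgg hm i₁) (hgg hm i₂) (hgg hm i₃) s, plucker_eq, plucker_eq]
    simp only [det3]
    ring
  simp only [hdd]
  rw [key]
  -- component values at s
  have C00 : gg m 0 s = 1 + qfun m 0 s := congrFun gg_eq0 s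
  have C10 : gg m 1 s = -1 + qfun m 0 s := congrFun gg_eq1 s
  have C20 : gg m 2 s = Dm m 0 0 s := congrFun gg_eq2 s
  have C30 : gg m 3 s = Dm m 0 1 s := congrFun gg_eq3 s
  have C40 : gg m 4 s = Dm m 0 2 s := congrFun gg_eq4 s
  have C01 : deriv (gg m 0) s = qfun m 1 s := by
    rw [← iteratedDeriv_one, iter_gg0 hm 1 (by norm_num) (by norm_num)]
  have C11 : deriv (gg m 1) s = qfun m 1 s := by
    rw [← iteratedDeriv_one, iter_gg1 hm 1 (by norm_num) (by norm_num)]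
  have C21 : deriv (gg m 2) s = Dm m 1 0 s := by rw [← iteratedDeriv_one, iter_gg2]
  have C31 : deriv (gg m 3) s = Dm m 1 1 s := by rw [← iteratedDeriv_one, iter_gg3]
  have C41 : deriv (gg m 4) s = Dm m 1 2 s := by rw [← iteratedDeriv_one, iter_gg4]
  have C02 : iteratedDeriv 2 (gg m 0) s = qfun m 2 s := by
    rw [iter_gg0 hm 2 (by norm_num) (by norm_num)]
  have C12 : iteratedDeriv 2 (gg m 1) s = qfun m 2 s := by
    rw [iter_gg1 hm 2 (by norm_num) (by norm_num)]
  have C22 : iteratedDeriv 2 (gg m 2) s = Dm m 2 0 s := by rw [iter_gg2]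
  have C32 : iteratedDeriv 2 (gg m 3) s = Dm m 2 1 s := by rw [iter_gg3]
  have C42 : iteratedDeriv 2 (gg m 4) s = Dm m 2 2 s := by rw [iter_gg4]
  have C03 : iteratedDeriv 3 (gg m 0) s = qfun m 3 s := by
    rw [iter_gg0 hm 3 (by norm_num) (by norm_num)]
  have C13 : iteratedDeriv 3 (gg m 1) s = qfun m 3 s := by
    rw [iter_gg1 hm 3 (by norm_num) (by norm_num)]
  have C23 : iteratedDeriv 3 (gg m 2) s = Dm m 3 0 s := by rw [iter_gg2]
  have C33 : iteratedDeriv 3 (gg m 3) s = Dm m 3 1 s := by rw [iter_gg3]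
  have C43 : iteratedDeriv 3 (gg m 4) s = Dm m 3 2 s := by rw [iter_gg4]
  have C04 : iteratedDeriv 4 (gg m 0) s = qfun m 4 s := by
    rw [iter_gg0 hm 4 (by norm_num) (by norm_num)]
  have C14 : iteratedDeriv 4 (gg m 1) s = qfun m 4 s := by
    rw [iter_gg1 hm 4 (by norm_num) (by norm_num)]
  have C24 : iteratedDeriv 4 (gg m 2) s = Dm m 4 0 s := by rw [iter_gg2]
  have C34 : iteratedDeriv 4 (gg m 3) s = Dm m 4 1 s := by rw [iter_gg3]
  have C44 : iteratedDeriv 4 (gg m 4) s = Dm m 4 2 s := by rw [iter_gg4]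
  have eA := relA hm harc s
  have eB := relB hm harc s
  have eC := relC hm harc hκ s
  have eK := relK hm hκ s
  have eT := relT hm hτ s
  -- the twelve needed Gram entries
  have hUU : mink (fun i => gg m i s) (fun i => gg m i s) = 0 := by
    simp only [mink, C00, C10, C20, C30, C40, qfun]; ring
  have hUV : mink (fun i => gg m i s) (fun i => iteratedDeriv 2 (gg m i) s) = -1 := by
    simp only [mink, C00, C10, C20, C30, C40, C02, C12, C22, C32, C42, qfun]
    linear_combination -eA
  have hVU : mink (fun i => iteratedDeriv 2 (gg m i) s) (fun i => gg m i s) = -1 := by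
    simp only [mink, C00, C10, C20, C30, C40, C02, C12, C22, C32, C42, qfun]
    linear_combination -eA
  have hUW : mink (fun i => gg m i s) (fun i => iteratedDeriv 3 (gg m i) s) = 0 := by
    simp only [mink, C00, C10, C20, C30, C40, C03, C13, C23, C33, C43, qfun]
    linear_combination (-3 : ℝ) * eB
  have hWU : mink (fun i => iteratedDeriv 3 (gg m i) s) (fun i => gg m i s) = 0 := by
    simp only [mink, C00, C10, C20, C30, C40, C03, C13, C23, C33, C43, qfun]
    linear_combination (-3 : ℝ) * eB
  have hUV' : mink (fun i => gg m i s) (fun i => deriv (gg m i) s) = 0 := by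
    simp only [mink, C00, C10, C20, C30, C40, C01, C11, C21, C31, C41, qfun]; ring
  have hV'U : mink (fun i => deriv (gg m i) s) (fun i => gg m i s) = 0 := by
    simp only [mink, C00, C10, C20, C30, C40, C01, C11, C21, C31, C41, qfun]; ring
  have hUW' : mink (fun i => gg m i s) (fun i => iteratedDeriv 4 (gg m i) s) = κ s ^ 2 := by
    simp only [mink, C00, C10, C20, C30, C40, C04, C14, C24, C34, C44, qfun]
    linear_combination (-3 : ℝ) * eK - 4 * eC
  have hW'U : mink (fun i => iteratedDeriv 4 (gg m i) s) (fun i => gg m i s) = κ s ^ 2 := by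
    simp only [mink, C00, C10, C20, C30, C40, C04, C14, C24, C34, C44, qfun]
    linear_combination (-3 : ℝ) * eK - 4 * eC
  have hV'V' : mink (fun i => deriv (gg m i) s) (fun i => deriv (gg m i) s) = 1 := by
    simp only [mink, C01, C11, C21, C31, C41, qfun]
    linear_combination eA
  have hWV' : mink (fun i => iteratedDeriv 3 (gg m i) s) (fun i => deriv (gg m i) s)
      = -(κ s ^ 2) := by
    simp only [mink, C01, C11, C21, C31, C41, C03, C13, C23, C33, C43, qfun]
    linear_combination eC
  have hWW : mink (fun i => iteratedDeriv 3 (gg m i) s) (fun i => iteratedDeriv 3 (gg m i) s)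
      = κ s ^ 4 + (deriv κ s) ^ 2 + κ s ^ 2 * τ s ^ 2 := by
    simp only [mink, C03, C13, C23, C33, C43, qfun]
    linear_combination eT
  rw [hUU, hUV, hVU, hUW, hWU, hUV', hV'U, hUW', hW'U, hV'V', hWV', hWW]
  constructor
  · simp only [det3]; ring
  · rw [show -( det3 0 (-1) 0 (-1)
        (mink (fun i => iteratedDeriv 2 (gg m i) s) (fun i => iteratedDeriv 2 (gg m i) s))
        (mink (fun i => iteratedDeriv 2 (gg m i) s) (fun i => iteratedDeriv 3 (gg m i) s))
        0 (mink (fun i => iteratedDeriv 3 (gg m i) s) (fun i => iteratedDeriv 2 (gg m i) s))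
        (κ s ^ 4 + (deriv κ s) ^ 2 + κ s ^ 2 * τ s ^ 2)
      + 2 * det3 0 0 (κ s ^ 2) (-1)
        (mink (fun i => iteratedDeriv 2 (gg m i) s) (fun i => deriv (gg m i) s))
        (mink (fun i => iteratedDeriv 2 (gg m i) s) (fun i => iteratedDeriv 4 (gg m i) s))
        0 (-(κ s ^ 2))
        (mink (fun i => iteratedDeriv 3 (gg m i) s) (fun i => iteratedDeriv 4 (gg m i) s))
      + det3 0 0 (κ s ^ 2) 0 1
        (mink (fun i => deriv (gg m i) s) (fun i => iteratedDeriv 4 (gg m i) s))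
        (κ s ^ 2)
        (mink (fun i => iteratedDeriv 4 (gg m i) s) (fun i => deriv (gg m i) s))
        (mink (fun i => iteratedDeriv 4 (gg m i) s) (fun i => iteratedDeriv 4 (gg m i) s)))
      = (deriv κ s) ^ 2 + κ s ^ 2 * τ s ^ 2 by simp only [det3]; ring]
    rw [abs_of_nonneg (by positivity)]
end
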